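/- For all real numbers x, y ≥ 0 and r ≥ 0 with n = ⌊r⌋, one has (x+y)^r ≤ x^r + C(r,1)·x^{r-1}·y + C(r,2)·x^{r-2}·y^2 + ⋯ + C(r,n)·x^{r-n}·y^n + y^r, where C(r,k) = r(r-1)⋯(r-k+1)/k! is the generalized binomial coefficient (for r < 1 the inequality reads (x+y)^r ≤ x^r + y^r). -/

import Mathlib

open Finset NNReal

/-- Generalized binomial coefficient C(r,k) = r(r-1)⋯(r-k+1)/k!. -/
noncomputable def genBinom (r : ℝ) (k : ℕ) : ℝ :=
  (∏ i ∈ Finset.range k, (r - i)) / (Nat.factorial k : ℝ)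

lemma genBinom_zero (r : ℝ) : genBinom r 0 = 1 := by simp [genBinom]

lemma genBinom_succ_mul (r : ℝ) (j : ℕ) :
    genBinom r (j + 1) * (j + 1) = r * genBinom (r - 1) j := by
  have h : ∏ i ∈ Finset.range (j+1), (r - i) = (∏ i ∈ Finset.range j, (r - 1 - i)) * r := by
    rw [Finset.prod_range_succ']
    congr 1
    · apply Finset.prod_congr rfl
      intro i _
      push_cast; ring
    · simp
  simp only [genBinom, h, Nat.factorial_succ]
  have hj : (Nat.factorial j : ℝ) ≠ 0 := by positivity
  push_cast
  field_simp

lemma genBinom_nonneg {r : ℝ} {k : ℕ} (h : (k : ℝ) ≤ r) : 0 ≤ genBinom r k := by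
  apply div_nonneg _ (by positivity)
  apply Finset.prod_nonneg
  intro i hi
  simp only [Finset.mem_range] at hi
  have : (i : ℝ) + 1 ≤ k := by exact_mod_cast hi
  linarith

lemma key : ∀ n : ℕ, ∀ r x y : ℝ, 0 ≤ r → ⌊r⌋₊ = n → 0 ≤ x → 0 ≤ y →
    (x + y) ^ r ≤
      x ^ r + (∑ k ∈ Finset.Icc 1 n, genBinom r k * x ^ (r - k) * y ^ k) + y ^ r := by
  intro n
  induction n with
  | zero =>
    intro r x y hr hfl hx hy
    have hr1 : r ≤ 1 := le_of_lt (Nat.floor_eq_zero.mp hfl)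
    rw [show Finset.Icc 1 0 = (∅ : Finset ℕ) by rfl]
    simp only [Finset.sum_empty, add_zero]
    have h := NNReal.rpow_add_le_add_rpow x.toNNReal y.toNNReal hr hr1
    have hc : ∀ a : ℝ, 0 ≤ a → ((a.toNNReal : ℝ≥0) : ℝ) = a := fun a ha => Real.coe_toNNReal a ha
    calc (x+y)^r = (((x.toNNReal + y.toNNReal : ℝ≥0) : ℝ)) ^ r := by
            rw [NNReal.coe_add, hc x hx, hc y hy]
      _ = (((x.toNNReal + y.toNNReal) ^ r : ℝ≥0) : ℝ) := by rw [NNReal.coe_rpow]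
      _ ≤ ((x.toNNReal ^ r + y.toNNReal ^ r : ℝ≥0) : ℝ) := by exact_mod_cast h
      _ = x ^ r + y ^ r := by
            rw [NNReal.coe_add, NNReal.coe_rpow, NNReal.coe_rpow, hc x hx, hc y hy]
  | succ n ih =>
    intro r x y hr hfl hx hy
    have hrange := (Nat.floor_eq_iff hr).mp hfl
    obtain ⟨hlo, hhi⟩ := hrange
    push_cast at hlo hhi
    have hr1 : (1:ℝ) ≤ r := by linarith [Nat.cast_nonneg (α := ℝ) n]
    have hfl' : ⌊r - 1⌋₊ = n := by
      rw [Nat.floor_eq_iff (by linarith)]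
      constructor <;> [linarith; linarith]
    set c : ℕ → ℝ := fun k => genBinom r k * x ^ (r - k) with hc
    set F : ℝ → ℝ := fun t =>
      x ^ r + (∑ k ∈ Finset.Icc 1 (n+1), c k * t ^ k) + t ^ r - (x + t) ^ r with hF
    have hF' : ∀ t : ℝ, 0 < t → HasDerivAt F
        ((∑ k ∈ Finset.Icc 1 (n+1), c k * (k * t ^ (k-1))) + r * t ^ (r-1)
          - r * (x + t) ^ (r-1)) t := by
      intro t ht
      have h1 : HasDerivAt (fun t : ℝ => ∑ k ∈ Finset.Icc 1 (n+1), c k * t ^ k)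
          (∑ k ∈ Finset.Icc 1 (n+1), c k * (k * t ^ (k-1))) t :=
        HasDerivAt.fun_sum fun k _ => (hasDerivAt_pow k t).const_mul (c k)
      have h2 : HasDerivAt (fun t : ℝ => t ^ r) (r * t ^ (r-1)) t :=
        Real.hasDerivAt_rpow_const (Or.inl ht.ne')
      have h3 : HasDerivAt (fun t : ℝ => (x + t) ^ r) (r * (x + t) ^ (r-1)) t := by
        have hxt : x + t ≠ 0 := by positivity
        have := ((hasDerivAt_id t).const_add x).rpow_const (p := r) (Or.inl hxt)
        simpa using this
      have := (((hasDerivAt_const t (x ^ r)).add h1).add h2).sub h3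
      refine this.congr_deriv ?_
      ring
    have hderiv : ∀ t ∈ interior (Set.Ici (0:ℝ)), 0 ≤ deriv F t := by
      rw [interior_Ici]
      intro t ht
      rw [(hF' t ht).deriv]
      have hS : ∑ k ∈ Finset.Icc 1 (n+1), c k * (k * t ^ (k-1))
          = r * ∑ j ∈ Finset.range (n+1), genBinom (r-1) j * x ^ ((r-1) - j) * t ^ j := by
        rw [show Finset.Icc 1 (n+1) = Finset.Ico 1 (n+2) by rfl,
          Finset.sum_Ico_eq_sum_range, Finset.mul_sum]
        apply Finset.sum_congr (by norm_num)
        intro i _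
        have hb := genBinom_succ_mul r i
        have hexp : r - ((1 + i : ℕ) : ℝ) = (r - 1) - (i : ℝ) := by push_cast; ring
        simp only [hc, show 1 + i - 1 = i by omega, hexp, Nat.add_comm 1 i]
        push_cast
        rw [show r - ((i:ℝ) + 1) = r - 1 - (i:ℝ) by ring]
        linear_combination (x ^ ((r-1) - (i:ℝ)) * t ^ i) * hb
      rw [hS]
      have hsplit : ∑ j ∈ Finset.range (n+1), genBinom (r-1) j * x ^ ((r-1) - j) * t ^ j
          = x ^ (r-1) + ∑ j ∈ Finset.Icc 1 n, genBinom (r-1) j * x ^ ((r-1) - j) * t ^ j := by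
        rw [Finset.sum_range_succ']
        have : ∑ j ∈ Finset.Icc 1 n, genBinom (r-1) j * x ^ ((r-1) - j) * t ^ j
            = ∑ i ∈ Finset.range n, genBinom (r-1) (1+i) * x ^ ((r-1) - (1+i:ℕ)) * t ^ (1+i) := by
          rw [show Finset.Icc 1 n = Finset.Ico 1 (n+1) by rfl, Finset.sum_Ico_eq_sum_range]
          norm_num
        rw [this]
        simp [genBinom_zero, add_comm]
      have hIH := ih (r-1) x t (by linarith) hfl' hx ht.le
      rw [hsplit]
      have : (0:ℝ) ≤ (x ^ (r-1) + ∑ j ∈ Finset.Icc 1 n,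
          genBinom (r-1) j * x ^ ((r-1) - j) * t ^ j) + t ^ (r-1) - (x+t) ^ (r-1) := by
        linarith
      nlinarith
    have hcont : ContinuousOn F (Set.Ici (0:ℝ)) := by
      apply Continuous.continuousOn
      have c1 : Continuous fun t : ℝ => t ^ r := by
        rw [continuous_iff_continuousAt]
        intro t
        exact Real.continuousAt_rpow_const t r (Or.inr hr)
      have c2 : Continuous fun t : ℝ => (x + t) ^ r :=
        c1.comp (continuous_const.add continuous_id)
      exact ((continuous_const.add (continuous_finset_sum _ fun k _ =>
        continuous_const.mul (continuous_pow k))).add c1).sub c2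
    have hdiff : DifferentiableOn ℝ F (interior (Set.Ici (0:ℝ))) := by
      rw [interior_Ici]
      intro t ht
      exact (hF' t ht).differentiableAt.differentiableWithinAt
    have hmono := monotoneOn_of_deriv_nonneg (convex_Ici 0) hcont hdiff hderiv
    have hle := hmono Set.self_mem_Ici (Set.mem_Ici.mpr hy) hy
    have hF0 : F 0 = 0 := by
      simp only [hF]
      rw [Real.zero_rpow (by linarith), add_zero]
      rw [Finset.sum_eq_zero]
      · ring_nf
      · intro k hk
        rw [Finset.mem_Icc] at hk
        rw [zero_pow (by omega), mul_zero]
    rw [hF0] at hle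
    simp only [hF] at hle
    linarith

theorem stmt0 (x y r : ℝ) (hx : 0 ≤ x) (hy : 0 ≤ y) (hr : 0 ≤ r) :
    (x + y) ^ r ≤
      x ^ r + (∑ k ∈ Finset.Icc 1 ⌊r⌋₊, genBinom r k * x ^ (r - k) * y ^ k) + y ^ r :=
  key ⌊r⌋₊ r x y hr rfl hx hy
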